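/- arXiv:1410.6235 — 3 statements merged into one kernel-verified Lean document; each statement's English description precedes it below -/
import Mathlib

section
/- Let p, q, r be positive C¹ functions on [0,L], α₁ > 0, α₂ > 0, and for λ > 0 let f(·;λ) solve (p f')' - (q - λ r) f = 0 with f(0;λ) = 1, f'(0;λ) = α₁λ + α₂. On any open interval of λ > 0 on which f(x;λ) > 0 for all x ∈ [0,L], the function h₁(λ) = p(L) f'(L;λ)/(λ f(L;λ)) is strictly decreasing; indeed d/dλ h₁(λ) = -(λ f(L;λ))⁻² (α₂ p(0) + ∫₀ᴸ [p (f')² + q f²] dx) < 0. -/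
open Set

/-- On an open interval of positive `λ` where `f(·;λ) > 0` on `[0,L]`, the function
`h₁(λ) = p(L) f'(L;λ)/(λ f(L;λ))` is strictly decreasing, with the explicit derivative
`h₁'(λ) = -(λ f(L;λ))⁻² (α₂ p(0) + ∫₀ᴸ [p (f')² + q f²])`. -/
theorem stmt_5 (L a1 a2 : ℝ) (hL : 0 < L) (ha1 : 0 < a1) (ha2 : 0 < a2)
    (p q r : ℝ → ℝ) (f : ℝ → ℝ → ℝ) (I : Set ℝ)
    (hI : IsOpen I) (hIpos : I ⊆ Ioi 0) (hIconn : I.OrdConnected)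
    (hp : ContDiffOn ℝ 1 p (Icc 0 L)) (hq : ContDiffOn ℝ 1 q (Icc 0 L))
    (hr : ContDiffOn ℝ 1 r (Icc 0 L))
    (hppos : ∀ x ∈ Icc 0 L, 0 < p x) (hqpos : ∀ x ∈ Icc 0 L, 0 < q x)
    (hrpos : ∀ x ∈ Icc 0 L, 0 < r x)
    (hfsmooth : ∀ μ : ℝ, ContDiffOn ℝ 2 (f μ) (Icc 0 L))
    (hjoint : ContDiff ℝ 1 (fun z : ℝ × ℝ => f z.1 z.2))
    (hjoint' : ContDiff ℝ 1 (fun z : ℝ × ℝ => deriv (f z.1) z.2))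
    (hode : ∀ μ : ℝ, ∀ x ∈ Icc 0 L,
      deriv (fun y => p y * deriv (f μ) y) x - (q x - μ * r x) * f μ x = 0)
    (hinit0 : ∀ μ : ℝ, f μ 0 = 1)
    (hinit1 : ∀ μ : ℝ, deriv (f μ) 0 = a1 * μ + a2)
    (hfpos : ∀ μ ∈ I, ∀ x ∈ Icc 0 L, 0 < f μ x) :
    StrictAntiOn (fun μ => p L * deriv (f μ) L / (μ * f μ L)) I ∧
      ∀ μ ∈ I,
        deriv (fun ν => p L * deriv (f ν) L / (ν * f ν L)) μ
          = -((μ * f μ L) ^ 2)⁻¹ *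
            (a2 * p 0 + ∫ x in (0:ℝ)..L,
              (p x * (deriv (f μ) x) ^ 2 + q x * (f μ x) ^ 2)) ∧
        deriv (fun ν => p L * deriv (f ν) L / (ν * f ν L)) μ < 0 := by
  have hLmem : L ∈ Icc (0:ℝ) L := ⟨hL.le, le_rfl⟩
  have h0mem : (0:ℝ) ∈ Icc (0:ℝ) L := ⟨le_rfl, hL.le⟩
  have hfc : Continuous (fun z : ℝ × ℝ => f z.1 z.2) := hjoint.continuous
  have hfc' : Continuous (fun z : ℝ × ℝ => deriv (f z.1) z.2) := hjoint'.continuous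
  have hfcont : ∀ μ : ℝ, Continuous (f μ) :=
    fun μ => hfc.comp (continuous_const.prodMk continuous_id)
  have hfcont' : ∀ μ : ℝ, Continuous (fun y => deriv (f μ) y) :=
    fun μ => hfc'.comp (continuous_const.prodMk continuous_id)
  have hfLcont : Continuous (fun ν => f ν L) :=
    hfc.comp (continuous_id.prodMk continuous_const)
  have hfLcont' : Continuous (fun ν => deriv (f ν) L) :=
    hfc'.comp (continuous_id.prodMk continuous_const)
  have hfdiff : ∀ (μ y : ℝ), DifferentiableAt ℝ (f μ) y := by
    intro μ y
    exact ((hjoint.differentiable one_ne_zero) (μ, y)).comp y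
      ((differentiableAt_const μ).prodMk differentiableAt_id)
  have hfdiff' : ∀ (μ y : ℝ), DifferentiableAt ℝ (fun t => deriv (f μ) t) y := by
    intro μ y
    exact ((hjoint'.differentiable one_ne_zero) (μ, y)).comp y
      ((differentiableAt_const μ).prodMk differentiableAt_id)
  have hpdiff : ∀ x ∈ Ioo (0:ℝ) L, DifferentiableAt ℝ p x := fun x hx =>
    (hp.contDiffAt (Icc_mem_nhds hx.1 hx.2)).differentiableAt one_ne_zero
  -- the quasi-derivative `p f'` satisfies the ODE in `HasDerivAt` form on the interior
  have hg : ∀ (μ : ℝ), ∀ x ∈ Ioo (0:ℝ) L,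
      HasDerivAt (fun y => p y * deriv (f μ) y) ((q x - μ * r x) * f μ x) x := by
    intro μ x hx
    have h1 : DifferentiableAt ℝ (fun y => p y * deriv (f μ) y) x :=
      (hpdiff x hx).mul (hfdiff' μ x)
    have h2 := hode μ x (Ioo_subset_Icc_self hx)
    rw [sub_eq_zero] at h2
    have h3 := h1.hasDerivAt
    rw [h2] at h3
    exact h3
  -- Wronskian identity
  have hW : ∀ μ ν : ℝ,
      (ν - μ) * (∫ x in (0:ℝ)..L, r x * (f μ x * f ν x)) =
        (p L * deriv (f μ) L * f ν L - p L * deriv (f ν) L * f μ L) -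
          (p 0 * (a1 * μ + a2) - p 0 * (a1 * ν + a2)) := by
    intro μ ν
    set W : ℝ → ℝ := fun y => p y * deriv (f μ) y * f ν y - p y * deriv (f ν) y * f μ y with hWdef
    have hcont : ContinuousOn W (Icc 0 L) :=
      ((hp.continuousOn.mul (hfcont' μ).continuousOn).mul (hfcont ν).continuousOn).sub
        ((hp.continuousOn.mul (hfcont' ν).continuousOn).mul (hfcont μ).continuousOn)
    have hder : ∀ x ∈ Ioo (0:ℝ) L,
        HasDerivWithinAt W ((ν - μ) * (r x * (f μ x * f ν x))) (Ioi x) x := by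
      intro x hx
      have d1 := (hg μ x hx).fun_mul (hfdiff ν x).hasDerivAt
      have d2 := (hg ν x hx).fun_mul (hfdiff μ x).hasDerivAt
      have d3 := d1.fun_sub d2
      have h2μ := hode μ x (Ioo_subset_Icc_self hx)
      have h2ν := hode ν x (Ioo_subset_Icc_self hx)
      rw [sub_eq_zero] at h2μ h2ν
      have : HasDerivAt W ((ν - μ) * (r x * (f μ x * f ν x))) x := by
        refine d3.congr_deriv ?_
        ring
      exact this.hasDerivWithinAt
    have hint : IntervalIntegrable (fun x => (ν - μ) * (r x * (f μ x * f ν x))) MeasureTheory.volume 0 L := by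
      apply ContinuousOn.intervalIntegrable
      rw [uIcc_of_le hL.le]
      exact continuousOn_const.mul (hr.continuousOn.mul
        ((hfcont μ).continuousOn.mul (hfcont ν).continuousOn))
    have hftc := intervalIntegral.integral_eq_sub_of_hasDeriv_right_of_le hL.le hcont hder hint
    rw [intervalIntegral.integral_const_mul] at hftc
    rw [hftc, hWdef]
    simp only [hinit0, hinit1]
    ring
  -- energy identity
  have hE : ∀ μ : ℝ,
      (∫ x in (0:ℝ)..L, (p x * (deriv (f μ) x) ^ 2 + q x * (f μ x) ^ 2)) -
          μ * (∫ x in (0:ℝ)..L, r x * (f μ x * f μ x)) =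
        p L * deriv (f μ) L * f μ L - p 0 * (a1 * μ + a2) := by
    intro μ
    set E : ℝ → ℝ := fun y => p y * deriv (f μ) y * f μ y with hEdef
    have hcont : ContinuousOn E (Icc 0 L) :=
      (hp.continuousOn.mul (hfcont' μ).continuousOn).mul (hfcont μ).continuousOn
    have hder : ∀ x ∈ Ioo (0:ℝ) L,
        HasDerivWithinAt E
          ((p x * (deriv (f μ) x) ^ 2 + q x * (f μ x) ^ 2) - μ * (r x * (f μ x * f μ x)))
          (Ioi x) x := by
      intro x hx
      have d1 := (hg μ x hx).fun_mul (hfdiff μ x).hasDerivAt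
      have : HasDerivAt E
          ((p x * (deriv (f μ) x) ^ 2 + q x * (f μ x) ^ 2) - μ * (r x * (f μ x * f μ x))) x := by
        refine d1.congr_deriv ?_
        ring
      exact this.hasDerivWithinAt
    have hint1 : IntervalIntegrable
        (fun x => p x * (deriv (f μ) x) ^ 2 + q x * (f μ x) ^ 2) MeasureTheory.volume 0 L := by
      apply ContinuousOn.intervalIntegrable
      rw [uIcc_of_le hL.le]
      exact (hp.continuousOn.mul ((hfcont' μ).pow 2).continuousOn).add
        (hq.continuousOn.mul ((hfcont μ).pow 2).continuousOn)
    have hint2 : IntervalIntegrable (fun x => μ * (r x * (f μ x * f μ x))) MeasureTheory.volume 0 L := by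
      apply ContinuousOn.intervalIntegrable
      rw [uIcc_of_le hL.le]
      exact continuousOn_const.mul (hr.continuousOn.mul
        ((hfcont μ).continuousOn.mul (hfcont μ).continuousOn))
    have hftc := intervalIntegral.integral_eq_sub_of_hasDeriv_right_of_le hL.le hcont hder
      (hint1.sub hint2)
    rw [intervalIntegral.integral_sub hint1 hint2, intervalIntegral.integral_const_mul] at hftc
    rw [hftc, hEdef]
    simp only [hinit0, hinit1]
    ring
  -- continuity of the parametric integral
  have hJ : ∀ μ : ℝ, ContinuousAt (fun ν => ∫ x in (0:ℝ)..L, r x * (f μ x * f ν x)) μ := by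
    intro μ
    obtain ⟨C1, hC1⟩ := (isCompact_Icc (a := (0:ℝ)) (b := L)).exists_bound_of_continuousOn
      hr.continuousOn
    obtain ⟨C2, hC2⟩ := (isCompact_Icc (a := (0:ℝ)) (b := L)).exists_bound_of_continuousOn
      (hfcont μ).continuousOn
    obtain ⟨C3, hC3⟩ := ((isCompact_Icc (a := μ - 1) (b := μ + 1)).prod
      (isCompact_Icc (a := (0:ℝ)) (b := L))).exists_bound_of_continuousOn hfc.continuousOn
    have hC1nn : 0 ≤ C1 := le_trans (norm_nonneg _) (hC1 0 h0mem)
    have hC2nn : 0 ≤ C2 := le_trans (norm_nonneg _) (hC2 0 h0mem)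
    have hC3nn : 0 ≤ C3 := le_trans (norm_nonneg _)
      (hC3 (μ, 0) ⟨⟨by linarith, by linarith⟩, h0mem⟩)
    apply intervalIntegral.continuousAt_of_dominated_interval
      (bound := fun _ => C1 * (C2 * C3))
    · filter_upwards with ν
      rw [uIoc_of_le hL.le]
      exact ((hr.continuousOn.mul ((hfcont μ).continuousOn.mul
        (hfcont ν).continuousOn)).mono Ioc_subset_Icc_self).aestronglyMeasurable
        measurableSet_Ioc
    · filter_upwards [Icc_mem_nhds (by linarith : μ - 1 < μ) (by linarith : μ < μ + 1)] with ν hν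
      filter_upwards with t ht
      rw [uIoc_of_le hL.le] at ht
      have ht' : t ∈ Icc (0:ℝ) L := Ioc_subset_Icc_self ht
      have b1 := hC1 t ht'
      have b2 := hC2 t ht'
      have b3 := hC3 (ν, t) ⟨hν, ht'⟩
      calc ‖r t * (f μ t * f ν t)‖ = ‖r t‖ * (‖f μ t‖ * ‖f ν t‖) := by
            rw [norm_mul, norm_mul]
        _ ≤ C1 * (C2 * C3) := by
            apply mul_le_mul b1 _ (by positivity) hC1nn
            exact mul_le_mul b2 b3 (norm_nonneg _) hC2nn
    · exact intervalIntegrable_const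
    · filter_upwards with t ht
      exact (continuousAt_const.mul (continuousAt_const.mul
        ((hfc.comp (continuous_id.prodMk continuous_const)).continuousAt)))
  -- the main derivative computation
  have main : ∀ μ ∈ I,
      HasDerivAt (fun ν => p L * deriv (f ν) L / (ν * f ν L))
        (-((μ * f μ L) ^ 2)⁻¹ *
          (a2 * p 0 + ∫ x in (0:ℝ)..L,
            (p x * (deriv (f μ) x) ^ 2 + q x * (f μ x) ^ 2))) μ := by
    intro μ hμ
    have hμ0 : 0 < μ := hIpos hμ
    have hA : 0 < f μ L := hfpos μ hμ L hLmem
    set J : ℝ → ℝ := fun ν => ∫ x in (0:ℝ)..L, r x * (f μ x * f ν x) with hJdef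
    set K : ℝ := ∫ x in (0:ℝ)..L, (p x * (deriv (f μ) x) ^ 2 + q x * (f μ x) ^ 2) with hKdef
    set Φ : ℝ → ℝ := fun ν =>
      (μ * (p 0 * a1) - μ * J ν - p L * deriv (f μ) L * f ν L) /
        (μ * ν * (f μ L * f ν L)) with hΦdef
    rw [hasDerivAt_iff_tendsto_slope]
    have heq : slope (fun ν => p L * deriv (f ν) L / (ν * f ν L)) μ =ᶠ[nhdsWithin μ {μ}ᶜ] Φ := by
      filter_upwards [nhdsWithin_le_nhds (hI.mem_nhds hμ), self_mem_nhdsWithin] with ν hν hν'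
      have hνμ : ν ≠ μ := hν'
      have hν0 : 0 < ν := hIpos hν
      have hB : 0 < f ν L := hfpos ν hν L hLmem
      have hw := hW μ ν
      rw [slope_def_field, hΦdef]
      have hsub : ν - μ ≠ 0 := sub_ne_zero.mpr hνμ
      field_simp
      linear_combination μ * hw
    have hΦc : ContinuousAt Φ μ := by
      apply ContinuousAt.div
      · exact (continuousAt_const.sub (continuousAt_const.mul (hJ μ))).sub
          (continuousAt_const.mul hfLcont.continuousAt)
      · exact (continuousAt_const.mul continuousAt_id).mul
          (continuousAt_const.mul hfLcont.continuousAt)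
      · have : μ * μ * (f μ L * f μ L) > 0 := by positivity
        exact ne_of_gt this
    have hval : Φ μ = -((μ * f μ L) ^ 2)⁻¹ * (a2 * p 0 + K) := by
      have he := hE μ
      rw [hΦdef]
      have hAne : f μ L ≠ 0 := ne_of_gt hA
      have hμne : μ ≠ 0 := ne_of_gt hμ0
      field_simp
      linear_combination he
    have : Filter.Tendsto Φ (nhdsWithin μ {μ}ᶜ) (nhds (-((μ * f μ L) ^ 2)⁻¹ * (a2 * p 0 + K))) := by
      rw [← hval]
      exact hΦc.tendsto.mono_left nhdsWithin_le_nhds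
    exact this.congr' heq.symm
  have hneg : ∀ μ ∈ I,
      -((μ * f μ L) ^ 2)⁻¹ *
        (a2 * p 0 + ∫ x in (0:ℝ)..L,
          (p x * (deriv (f μ) x) ^ 2 + q x * (f μ x) ^ 2)) < 0 := by
    intro μ hμ
    have hμ0 : 0 < μ := hIpos hμ
    have hA : 0 < f μ L := hfpos μ hμ L hLmem
    have hKnn : 0 ≤ ∫ x in (0:ℝ)..L, (p x * (deriv (f μ) x) ^ 2 + q x * (f μ x) ^ 2) := by
      apply intervalIntegral.integral_nonneg hL.le
      intro u hu
      exact add_nonneg (mul_nonneg (hppos u hu).le (sq_nonneg _))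
        (mul_nonneg (hqpos u hu).le (sq_nonneg _))
    have hp0 : 0 < p 0 := hppos 0 h0mem
    have h1 : 0 < ((μ * f μ L) ^ 2)⁻¹ := by positivity
    have h2 : 0 < a2 * p 0 + ∫ x in (0:ℝ)..L,
        (p x * (deriv (f μ) x) ^ 2 + q x * (f μ x) ^ 2) := by positivity
    rw [neg_mul]
    exact neg_lt_zero.mpr (mul_pos h1 h2)
  constructor
  · apply strictAntiOn_of_deriv_neg (convex_iff_ordConnected.mpr hIconn)
    · intro μ hμ
      exact (main μ hμ).continuousAt.continuousWithinAt
    · intro μ hμ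
      rw [hI.interior_eq] at hμ
      rw [(main μ hμ).deriv]
      exact hneg μ hμ
  · intro μ hμ
    refine ⟨(main μ hμ).deriv, ?_⟩
    rw [(main μ hμ).deriv]
    exact hneg μ hμ
end

section
/- Let p, q, r be positive continuous functions on [0,L] with p' > 0, α₁ > 0, α₂ > 0, and let f(·;λ) solve (p f')' - (q - λ r) f = 0 with f(0;λ) = 1, f'(0;λ) = α₁λ + α₂. Then for all sufficiently negative λ, f(·;λ) has exactly one zero in (0,L). -/
open Set

set_option maxHeartbeats 1000000 in
private theorem stmt_11_coeff (L a1 a2 : ℝ) (hL : 0 < L) (ha1 : 0 < a1) (ha2 : 0 < a2)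
    (pM Q R p0 : ℝ) (hp0pos : 0 < p0) (hpMpos : 0 < pM) (hQpos : 0 < Q) (hRpos : 0 < R)
    (μ : ℝ)
    (hμ1 : μ < -((a2+1)/a1))
    (hμ3 : μ < -((4*pM/(p0*L) + a2)/a1))
    (hμ2 : μ < -((2*a2+2)/a1 + 16*(Q+R+1)*pM/(p0*a1)^2 + 1)) :
    (a1*μ+a2 < -1) ∧ (μ < 0) ∧ (p0 * (a1*μ+a2) * L < (-4) * pM)
      ∧ (4 * (Q - μ * R) * pM < (p0 * (a1*μ+a2))^2) := by
  obtain ⟨c, hcdef⟩ : ∃ z, z = a1 * μ + a2 := ⟨_, rfl⟩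
  rw [← hcdef]
  have k1 : a2 + 1 < -μ * a1 := by
    have := (div_lt_iff₀ ha1).mp (show (a2+1)/a1 < -μ by linarith)
    linarith
  have hc : c < -1 := by rw [hcdef]; nlinarith
  have hcneg : c < 0 := hc.trans (by norm_num)
  have e1 : 0 ≤ (2*a2+2)/a1 := by positivity
  have e2 : 0 ≤ 16*(Q+R+1)*pM/(p0*a1)^2 := by positivity
  have hν3 : μ < -1 := by linarith
  have hμneg : μ < 0 := by linarith
  have hpl : 0 < p0 * L := mul_pos hp0pos hL
  have hC3 : p0 * c * L < (-4) * pM := by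
    have k3 : 4*pM/(p0*L) + a2 < -μ * a1 := by
      have := (div_lt_iff₀ ha1).mp (show (4*pM/(p0*L) + a2)/a1 < -μ by linarith)
      linarith
    have h2 : 4*pM/(p0*L) < -c := by rw [hcdef]; nlinarith
    have h3 := (div_lt_iff₀ hpl).mp h2
    nlinarith
  have hA : 2*a2+2 < -μ * a1 := by
    have := (div_lt_iff₀ ha1).mp (show (2*a2+2)/a1 < -μ by linarith)
    linarith
  have hB : 16*(Q+R+1)*pM < -μ * (p0*a1)^2 := by
    have := (div_lt_iff₀ (show (0:ℝ) < (p0*a1)^2 by positivity)).mp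
      (show 16*(Q+R+1)*pM/(p0*a1)^2 < -μ by linarith)
    linarith
  have hc2a : c ≤ a1 * μ / 2 := by rw [hcdef]; nlinarith
  have hcsq : (a1*μ)^2/4 ≤ c^2 := by
    have hf1 : (0:ℝ) ≤ a1*μ/2 - c := by linarith
    have hf2 : (0:ℝ) ≤ -(c + a1*μ/2) := by nlinarith
    nlinarith [mul_nonneg hf1 hf2]
  have hkey : 4*(Q+R+1)*pM*(-μ) ≤ (p0*c)^2 := by
    have hs1 := mul_le_mul_of_nonneg_right hB.le (show (0:ℝ) ≤ -μ by linarith)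
    have hs2 := mul_le_mul_of_nonneg_left hcsq (show (0:ℝ) ≤ p0^2 by positivity)
    nlinarith [hs1, hs2]
  have hC2 : 4 * (Q - μ * R) * pM < (p0 * c)^2 := by
    have m1 : 0 ≤ (-μ - 1) * (Q*pM) := mul_nonneg (by linarith) (by positivity)
    have m2 : 0 < (-μ) * pM := mul_pos (by linarith) hpMpos
    nlinarith [hkey, m1, m2]
  exact ⟨hc, hμneg, hC3, hC2⟩


set_option maxHeartbeats 1000000 in
theorem zero_unique_aux (L pM K c p0 : ℝ) (hL : 0 < L)
    (p V g P : ℝ → ℝ)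
    (hgc : ContinuousOn g (Icc 0 L))
    (hgd : ∀ y ∈ Ioo 0 L, DifferentiableAt ℝ g y)
    (hPc : ContinuousOn P (Ico 0 L))
    (hPd : ∀ y ∈ Ioo 0 L, DifferentiableAt ℝ P y)
    (hgderiv : ∀ y ∈ Ioo 0 L, deriv g y = P y / p y)
    (hppos : ∀ y ∈ Icc 0 L, 0 < p y) (hpMb : ∀ y ∈ Icc 0 L, p y ≤ pM)
    (hPderiv : ∀ y ∈ Ioo 0 L, deriv P y = V y * g y)
    (hV : ∀ y ∈ Icc 0 L, 0 < V y) (hVK : ∀ y ∈ Icc 0 L, V y ≤ K)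
    (hg0 : g 0 = 1) (hP0 : P 0 = p0 * c)
    (hc : c < 0) (hp0 : 0 < p0) (hpM : 0 < pM) (hK : 0 < K)
    (hC2 : 4 * K * pM < (p0*c)^2)
    (hC3 : p0 * c * L < (-4) * pM) :
    ∃! x, x ∈ Ioo 0 L ∧ g x = 0 := by
  have hp0c : p0 * c < 0 := mul_neg_of_pos_of_neg hp0 hc
  obtain ⟨xh, hxh⟩ : ∃ z, z = -(p0*c)/(2*K) := ⟨_, rfl⟩
  have hxhpos : 0 < xh := by
    rw [hxh]; exact div_pos (by linarith) (by linarith)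
  have hxhK : 2*K*xh = -(p0*c) := by
    have h2K : (2*K) ≠ 0 := by positivity
    rw [hxh, mul_comm, div_mul_cancel₀ _ h2K]
  obtain ⟨m', hm'⟩ : ∃ z, z = min xh (L/2) := ⟨_, rfl⟩
  have hm'pos : 0 < m' := by rw [hm']; exact lt_min hxhpos (by linarith)
  have hm'L : m' < L := by
    rw [hm']; exact lt_of_le_of_lt (min_le_right _ _) (by linarith)
  have hm'xh : m' ≤ xh := by rw [hm']; exact min_le_left _ _
  have hIccL : Icc 0 m' ⊆ Icc 0 L := Icc_subset_Icc le_rfl hm'L.le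
  have hbd : ∀ y, 0 ≤ y → y ≤ m' → p0*c + 2*K*y ≤ 0 := by
    intro y h0 h1
    have h2 : y ≤ xh := h1.trans hm'xh
    have h3 := mul_le_mul_of_nonneg_left h2 (show (0:ℝ) ≤ 2*K by linarith)
    linarith [hxhK]
  -- the key bootstrap estimate
  have key : ∀ z, z ∈ Icc 0 m' → (∀ y ∈ Ico 0 z, g y ≤ 2) →
      (∀ x ∈ Icc 0 z, P x ≤ p0*c + 2*K*x) ∧ AntitoneOn g (Icc 0 z) := by
    intro z hz hg2
    have hzL : z < L := lt_of_le_of_lt hz.2 hm'L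
    have hsub1 : Icc 0 z ⊆ Ico 0 L := fun y hy => ⟨hy.1, lt_of_le_of_lt hy.2 hzL⟩
    have hsub2 : Ioo 0 z ⊆ Ioo 0 L := fun y hy => ⟨hy.1, lt_trans hy.2 hzL⟩
    have hsub3 : Icc 0 z ⊆ Icc 0 L := fun y hy => ⟨hy.1, le_trans hy.2 hzL.le⟩
    have hφderiv : ∀ y ∈ Ioo 0 z,
        HasDerivAt (fun y => p0*c + 2*K*y - P y) (2*K - deriv P y) y := by
      intro y hy
      have h1 : HasDerivAt (fun y => p0*c + 2*K*y) (2*K) y := by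
        simpa using ((hasDerivAt_id y).const_mul (2*K)).const_add (p0*c)
      exact h1.sub (hPd y (hsub2 hy)).hasDerivAt
    have hφmono : MonotoneOn (fun y => p0*c + 2*K*y - P y) (Icc 0 z) := by
      apply monotoneOn_of_deriv_nonneg (convex_Icc 0 z)
      · exact ((continuous_const.add (continuous_const.mul continuous_id)).continuousOn).sub
          (hPc.mono hsub1)
      · intro y hy
        rw [interior_Icc] at hy
        exact ((hφderiv y hy).differentiableAt).differentiableWithinAt
      · intro y hy
        rw [interior_Icc] at hy
        rw [(hφderiv y hy).deriv]
        have hyL : y ∈ Ioo 0 L := hsub2 hy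
        have hyI : y ∈ Icc 0 L := Ioo_subset_Icc_self hyL
        rw [hPderiv y hyL]
        rcases le_or_gt 0 (g y) with h | h
        · have h2 : g y ≤ 2 := hg2 y ⟨hy.1.le, hy.2⟩
          nlinarith [hV y hyI, hVK y hyI]
        · nlinarith [hV y hyI]
    have hPbound : ∀ x ∈ Icc 0 z, P x ≤ p0*c + 2*K*x := by
      intro x hx
      have h0z : (0:ℝ) ∈ Icc 0 z := ⟨le_rfl, hz.1⟩
      have h := hφmono h0z hx hx.1
      dsimp only at h
      rw [hP0] at h
      linarith
    refine ⟨hPbound, ?_⟩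
    apply antitoneOn_of_deriv_nonpos (convex_Icc 0 z) (hgc.mono hsub3)
    · intro y hy; rw [interior_Icc] at hy
      exact (hgd y (hsub2 hy)).differentiableWithinAt
    · intro y hy; rw [interior_Icc] at hy
      have hyL := hsub2 hy
      rw [hgderiv y hyL]
      have hP := hPbound y ⟨hy.1.le, hy.2.le⟩
      have hb := hbd y hy.1.le (hy.2.le.trans hz.2)
      exact div_nonpos_of_nonpos_of_nonneg (by linarith) (hppos y (Ioo_subset_Icc_self hyL)).le
  -- g is bounded by 2 on [0, m']
  have hg2 : ∀ x ∈ Icc 0 m', g x ≤ 2 := by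
    by_contra hcon
    push_neg at hcon
    obtain ⟨x, hx, hgx⟩ := hcon
    have hAcl : IsClosed (Icc 0 m' ∩ g ⁻¹' (Ici 2)) :=
      (hgc.mono hIccL).preimage_isClosed_of_isClosed isClosed_Icc isClosed_Ici
    have hAne : (Icc 0 m' ∩ g ⁻¹' (Ici 2)).Nonempty := ⟨x, hx, hgx.le⟩
    have hAbdd : BddBelow (Icc 0 m' ∩ g ⁻¹' (Ici 2)) := ⟨0, fun y hy => hy.1.1⟩
    obtain ⟨w, hw⟩ : ∃ z, z = sInf (Icc 0 m' ∩ g ⁻¹' (Ici 2)) := ⟨_, rfl⟩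
    have hwA : w ∈ Icc 0 m' ∩ g ⁻¹' (Ici 2) := by rw [hw]; exact hAcl.csInf_mem hAne hAbdd
    have hw2 : 2 ≤ g w := hwA.2
    have hwm : w ∈ Icc 0 m' := hwA.1
    have hglt : ∀ y ∈ Ico 0 w, g y ≤ 2 := by
      intro y hy
      by_contra h
      push_neg at h
      have hyA : y ∈ Icc 0 m' ∩ g ⁻¹' (Ici 2) := ⟨⟨hy.1, hy.2.le.trans hwm.2⟩, h.le⟩
      have := csInf_le hAbdd hyA
      rw [← hw] at this
      exact absurd hy.2 (not_lt.mpr this)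
    obtain ⟨hPb, hanti⟩ := key w hwm hglt
    have h1 : g w ≤ g 0 := hanti ⟨le_rfl, hwm.1⟩ ⟨hwm.1, le_rfl⟩ hwm.1
    rw [hg0] at h1
    linarith
  obtain ⟨hPb, hanti⟩ := key m' ⟨hm'pos.le, le_rfl⟩ (fun y hy => hg2 y (Ico_subset_Icc_self hy))
  -- integral bound: g m' is negative
  have hχ : g m' ≤ 1 + (p0*c*m' + K*m'^2)/pM := by
    have hsub1 : Icc 0 m' ⊆ Ico 0 L := fun y hy => ⟨hy.1, lt_of_le_of_lt hy.2 hm'L⟩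
    have hsub2 : Ioo 0 m' ⊆ Ioo 0 L := fun y hy => ⟨hy.1, lt_trans hy.2 hm'L⟩
    have hχderiv : ∀ y ∈ Ioo 0 m',
        HasDerivAt (fun y => 1 + (p0*c*y + K*y^2)/pM - g y) ((p0*c + 2*K*y)/pM - deriv g y) y := by
      intro y hy
      have h1 : HasDerivAt (fun y => p0*c*y + K*y^2) (p0*c + 2*K*y) y := by
        have h2 := ((hasDerivAt_id y).const_mul (p0*c)).add ((hasDerivAt_pow 2 y).const_mul K)
        exact h2.congr_deriv (by norm_num; ring)
      exact ((h1.div_const pM).const_add 1).sub (hgd y (hsub2 hy)).hasDerivAt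
    have hχmono : MonotoneOn (fun y => 1 + (p0*c*y + K*y^2)/pM - g y) (Icc 0 m') := by
      apply monotoneOn_of_deriv_nonneg (convex_Icc 0 m')
      · apply ContinuousOn.sub
        · apply ContinuousOn.add continuousOn_const
          exact ((continuousOn_const.mul continuousOn_id).add
            (continuousOn_const.mul (continuousOn_id.pow 2))).div_const pM
        · exact hgc.mono hIccL
      · intro y hy
        rw [interior_Icc] at hy
        exact ((hχderiv y hy).differentiableAt).differentiableWithinAt
      · intro y hy
        rw [interior_Icc] at hy
        rw [(hχderiv y hy).deriv]
        have hyL : y ∈ Ioo 0 L := hsub2 hy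
        rw [hgderiv y hyL]
        have hpy : 0 < p y := hppos y (Ioo_subset_Icc_self hyL)
        have hpyM : p y ≤ pM := hpMb y (Ioo_subset_Icc_self hyL)
        have hPy : P y ≤ p0*c + 2*K*y := hPb y ⟨hy.1.le, hy.2.le⟩
        have hb : p0*c + 2*K*y ≤ 0 := hbd y hy.1.le hy.2.le
        have h2 : P y / p y ≤ (p0*c + 2*K*y)/pM := by
          rw [div_le_div_iff₀ hpy hpM]
          nlinarith [mul_le_mul_of_nonneg_right hPy hpM.le,
            mul_le_mul_of_nonpos_left hpyM hb]
        linarith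
    have h := hχmono ⟨le_rfl, hm'pos.le⟩ ⟨hm'pos.le, le_rfl⟩ hm'pos.le
    dsimp only at h
    rw [hg0] at h
    norm_num at h
    linarith
  have hgm' : g m' < 0 := by
    have hmain : p0*c*m' + K*m'^2 < -pM := by
      rcases min_cases xh (L/2) with ⟨heq, hle⟩ | ⟨heq, hlt⟩
      · -- m' = xh
        rw [hm', heq]
        have hval : p0*c*xh + K*xh^2 = -((p0*c)^2/(4*K)) := by
          rw [hxh]; field_simp; ring
        rw [hval, neg_lt_neg_iff, lt_div_iff₀ (show (0:ℝ) < 4*K by linarith)]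
        linarith
      · -- m' = L/2
        rw [hm', heq]
        have hKL : K*L*L ≤ -(p0*c)*L := by
          have h1 : L/2 ≤ xh := hlt.le
          have h2 := mul_le_mul_of_nonneg_left h1 (show (0:ℝ) ≤ 2*K by linarith)
          rw [hxhK] at h2
          nlinarith
        nlinarith
    have h2 : (p0*c*m' + K*m'^2)/pM < -1 := by
      rw [div_lt_iff₀ hpM]
      linarith
    linarith
  -- existence of a zero
  have hzero : ∃ x0 ∈ Icc 0 m', g x0 = 0 := by
    have h := intermediate_value_Icc' hm'pos.le (hgc.mono hIccL)
    have h0 : (0:ℝ) ∈ Icc (g m') (g 0) := ⟨hgm'.le, by rw [hg0]; norm_num⟩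
    obtain ⟨x0, hx0, hgx0⟩ := h h0
    exact ⟨x0, hx0, hgx0⟩
  obtain ⟨x0, hx0, hgx0⟩ := hzero
  have hZcl : IsClosed (Icc 0 L ∩ g ⁻¹' {0}) :=
    hgc.preimage_isClosed_of_isClosed isClosed_Icc isClosed_singleton
  have hZne : (Icc 0 L ∩ g ⁻¹' {0}).Nonempty := ⟨x0, hIccL hx0, hgx0⟩
  have hZbdd : BddBelow (Icc 0 L ∩ g ⁻¹' {0}) := ⟨0, fun y hy => hy.1.1⟩
  obtain ⟨x1, hx1⟩ : ∃ z, z = sInf (Icc 0 L ∩ g ⁻¹' {0}) := ⟨_, rfl⟩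
  have hx1Z : x1 ∈ Icc 0 L ∩ g ⁻¹' {0} := by rw [hx1]; exact hZcl.csInf_mem hZne hZbdd
  have hgx1 : g x1 = 0 := hx1Z.2
  have hx1le : x1 ≤ x0 := by rw [hx1]; exact csInf_le hZbdd ⟨hIccL hx0, hgx0⟩
  have hx1pos : 0 < x1 := by
    rcases eq_or_lt_of_le hx1Z.1.1 with h | h
    · exfalso; rw [← h] at hgx1; rw [hg0] at hgx1; norm_num at hgx1
    · exact h
  have hx0m : x0 < m' := by
    rcases eq_or_lt_of_le hx0.2 with h | h
    · exfalso; rw [h] at hgx0; rw [hgx0] at hgm'; norm_num at hgm'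
    · exact h
  have hx1m : x1 < m' := lt_of_le_of_lt hx1le hx0m
  have hx1L : x1 < L := lt_trans hx1m hm'L
  -- g is positive before x1
  have hgpos : ∀ y, 0 ≤ y → y < x1 → 0 < g y := by
    intro y h0 h1
    have hyL : y ∈ Icc 0 L := ⟨h0, by linarith⟩
    rcases lt_trichotomy (g y) 0 with h | h | h
    · exfalso
      obtain ⟨z, hz, hgz⟩ := intermediate_value_Icc' h0 (hgc.mono (Icc_subset_Icc le_rfl hyL.2))
        (⟨h.le, by rw [hg0]; norm_num⟩ : (0:ℝ) ∈ Icc (g y) (g 0))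
      have h2 : x1 ≤ z := by
        rw [hx1]; exact csInf_le hZbdd ⟨⟨hz.1, hz.2.trans hyL.2⟩, hgz⟩
      linarith [hz.2]
    · exfalso
      have h2 : x1 ≤ y := by rw [hx1]; exact csInf_le hZbdd ⟨hyL, h⟩
      linarith
    · exact h
  -- P is negative at x1
  have hPx1 : P x1 < 0 := by
    have h1 := hPb x1 ⟨hx1pos.le, hx1m.le⟩
    have h2 : x1 < xh := lt_of_lt_of_le hx1m hm'xh
    have h3 := mul_lt_mul_of_pos_left h2 (show (0:ℝ) < 2*K by linarith)
    rw [hxhK] at h3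
    linarith
  -- g is negative after x1
  have hneg : ∀ z, x1 < z → z < L → g z < 0 := by
    intro z hz1 hzL
    have hsubIcc : Icc x1 z ⊆ Icc 0 L := Icc_subset_Icc hx1pos.le hzL.le
    have hsubIco : Icc x1 z ⊆ Ico 0 L := fun y hy => ⟨hx1pos.le.trans hy.1, lt_of_le_of_lt hy.2 hzL⟩
    have hsubIoo : Ioo x1 z ⊆ Ioo 0 L := fun y hy => ⟨hx1pos.trans hy.1, hy.2.trans hzL⟩
    have hPle : ∀ x ∈ Icc x1 z, P x ≤ P x1 / 2 := by
      by_contra hcon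
      push_neg at hcon
      obtain ⟨x, hx, hgx⟩ := hcon
      have hAcl : IsClosed (Icc x1 z ∩ P ⁻¹' (Ici (P x1 / 2))) :=
        (hPc.mono hsubIco).preimage_isClosed_of_isClosed isClosed_Icc isClosed_Ici
      have hAne : (Icc x1 z ∩ P ⁻¹' (Ici (P x1 / 2))).Nonempty := ⟨x, hx, hgx.le⟩
      have hAbdd : BddBelow (Icc x1 z ∩ P ⁻¹' (Ici (P x1 / 2))) := ⟨x1, fun y hy => hy.1.1⟩
      obtain ⟨w, hw⟩ : ∃ u, u = sInf (Icc x1 z ∩ P ⁻¹' (Ici (P x1 / 2))) := ⟨_, rfl⟩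
      have hwA : w ∈ Icc x1 z ∩ P ⁻¹' (Ici (P x1 / 2)) := by
        rw [hw]; exact hAcl.csInf_mem hAne hAbdd
      have hwz : w ∈ Icc x1 z := hwA.1
      have hwx1 : x1 < w := by
        rcases eq_or_lt_of_le hwA.1.1 with h | h
        · exfalso
          have h2 := hwA.2
          rw [← h] at h2
          have h3 : P x1/2 ≤ P x1 := h2
          linarith
        · exact h
      have hPlt : ∀ y ∈ Ico x1 w, P y < P x1 / 2 := by
        intro y hy
        by_contra h
        push_neg at h
        have hyA : y ∈ Icc x1 z ∩ P ⁻¹' (Ici (P x1 / 2)) := ⟨⟨hy.1, hy.2.le.trans hwz.2⟩, h⟩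
        have := csInf_le hAbdd hyA
        rw [← hw] at this
        exact absurd hy.2 (not_lt.mpr this)
      have hsubw : Icc x1 w ⊆ Icc x1 z := Icc_subset_Icc le_rfl hwz.2
      have hsubw2 : Ioo x1 w ⊆ Ioo 0 L := fun y hy =>
        hsubIoo ⟨hy.1, lt_of_lt_of_le hy.2 hwz.2⟩
      have hganti : AntitoneOn g (Icc x1 w) := by
        apply antitoneOn_of_deriv_nonpos (convex_Icc _ _) (hgc.mono (hsubw.trans hsubIcc))
        · intro y hy; rw [interior_Icc] at hy
          exact (hgd y (hsubw2 hy)).differentiableWithinAt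
        · intro y hy; rw [interior_Icc] at hy
          have hyL : y ∈ Ioo 0 L := hsubw2 hy
          rw [hgderiv y hyL]
          have h2 := hPlt y ⟨hy.1.le, hy.2⟩
          exact div_nonpos_of_nonpos_of_nonneg (by linarith)
            (hppos y (Ioo_subset_Icc_self hyL)).le
      have hgle0 : ∀ y ∈ Icc x1 w, g y ≤ 0 := by
        intro y hy
        have h2 : g y ≤ g x1 := hganti ⟨le_rfl, hwx1.le⟩ hy hy.1
        rw [hgx1] at h2
        exact h2
      have hPanti : AntitoneOn P (Icc x1 w) := by
        apply antitoneOn_of_deriv_nonpos (convex_Icc _ _) (hPc.mono (hsubw.trans hsubIco))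
        · intro y hy; rw [interior_Icc] at hy
          exact (hPd y (hsubw2 hy)).differentiableWithinAt
        · intro y hy; rw [interior_Icc] at hy
          have hyL : y ∈ Ioo 0 L := hsubw2 hy
          rw [hPderiv y hyL]
          exact mul_nonpos_of_nonneg_of_nonpos (hV y (Ioo_subset_Icc_self hyL)).le
            (hgle0 y ⟨hy.1.le, hy.2.le⟩)
      have h3 : P w ≤ P x1 := hPanti ⟨le_rfl, hwx1.le⟩ ⟨hwx1.le, le_rfl⟩ hwx1.le
      have h4 : P x1/2 ≤ P w := hwA.2
      linarith
    have hstrict : StrictAntiOn g (Icc x1 z) := by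
      apply strictAntiOn_of_deriv_neg (convex_Icc _ _) (hgc.mono hsubIcc)
      intro y hy; rw [interior_Icc] at hy
      have hyL : y ∈ Ioo 0 L := hsubIoo hy
      rw [hgderiv y hyL]
      apply div_neg_of_neg_of_pos
      · have := hPle y ⟨hy.1.le, hy.2.le⟩
        linarith
      · exact hppos y (Ioo_subset_Icc_self hyL)
    have h5 : g z < g x1 := hstrict ⟨le_rfl, hz1.le⟩ ⟨hz1.le, le_rfl⟩ hz1
    rw [hgx1] at h5
    exact h5
  -- assemble the unique zero
  refine ⟨x1, ⟨⟨hx1pos, hx1L⟩, hgx1⟩, ?_⟩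
  rintro y ⟨⟨hy0, hyL⟩, hgy⟩
  rcases lt_trichotomy y x1 with h | h | h
  · exact absurd hgy (ne_of_gt (hgpos y hy0.le h))
  · exact h
  · exact absurd hgy (ne_of_lt (hneg y h hyL))


set_option maxHeartbeats 1000000 in
/-- For all sufficiently negative `λ`, the solution `f(·;λ)` of the initial value
problem has exactly one zero in `(0,L)`. -/
theorem stmt_11 (L a1 a2 : ℝ) (hL : 0 < L) (ha1 : 0 < a1) (ha2 : 0 < a2)
    (p q r : ℝ → ℝ) (f : ℝ → ℝ → ℝ)
    (hp : ContDiffOn ℝ 1 p (Icc 0 L)) (hq : ContinuousOn q (Icc 0 L))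
    (hr : ContinuousOn r (Icc 0 L))
    (hppos : ∀ x ∈ Icc 0 L, 0 < p x) (hqpos : ∀ x ∈ Icc 0 L, 0 < q x)
    (hrpos : ∀ x ∈ Icc 0 L, 0 < r x)
    (hp' : ∀ x ∈ Icc 0 L, 0 < deriv p x)
    (hfsmooth : ∀ μ : ℝ, ContDiffOn ℝ 2 (f μ) (Icc 0 L))
    (hode : ∀ μ : ℝ, ∀ x ∈ Icc 0 L,
      deriv (fun y => p y * deriv (f μ) y) x - (q x - μ * r x) * f μ x = 0)
    (hinit0 : ∀ μ : ℝ, f μ 0 = 1)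
    (hinit1 : ∀ μ : ℝ, deriv (f μ) 0 = a1 * μ + a2) :
    ∃ Λ : ℝ, ∀ μ : ℝ, μ < Λ →
      ∃! x, x ∈ Ioo 0 L ∧ f μ x = 0 := by
  have hIcc : IsCompact (Icc (0:ℝ) L) := isCompact_Icc
  have hne : (Icc (0:ℝ) L).Nonempty := nonempty_Icc.2 hL.le
  have h0mem : (0:ℝ) ∈ Icc 0 L := ⟨le_rfl, hL.le⟩
  obtain ⟨xM, hxM, hxMmax⟩ := hIcc.exists_isMaxOn hne hp.continuousOn
  obtain ⟨xQ, hxQ, hxQmax⟩ := hIcc.exists_isMaxOn hne hq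
  obtain ⟨xR, hxR, hxRmax⟩ := hIcc.exists_isMaxOn hne hr
  obtain ⟨pM, hpMdef⟩ : ∃ z, z = p xM := ⟨_, rfl⟩
  obtain ⟨Q, hQdef⟩ : ∃ z, z = q xQ := ⟨_, rfl⟩
  obtain ⟨R, hRdef⟩ : ∃ z, z = r xR := ⟨_, rfl⟩
  obtain ⟨p0, hp0def⟩ : ∃ z, z = p 0 := ⟨_, rfl⟩
  have hpMb : ∀ x ∈ Icc (0:ℝ) L, p x ≤ pM := fun x hx => by rw [hpMdef]; exact hxMmax hx
  have hQb : ∀ x ∈ Icc (0:ℝ) L, q x ≤ Q := fun x hx => by rw [hQdef]; exact hxQmax hx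
  have hRb : ∀ x ∈ Icc (0:ℝ) L, r x ≤ R := fun x hx => by rw [hRdef]; exact hxRmax hx
  have hp0pos : 0 < p0 := by rw [hp0def]; exact hppos 0 h0mem
  have hpMpos : 0 < pM := lt_of_lt_of_le hp0pos (by rw [hp0def]; exact hpMb 0 h0mem)
  have hQpos : 0 < Q := by rw [hQdef]; exact hqpos xQ hxQ
  have hRpos : 0 < R := by rw [hRdef]; exact hrpos xR hxR
  refine ⟨min (min (-((a2+1)/a1)) (-((4*pM/(p0*L) + a2)/a1)))
      (-((2*a2+2)/a1 + 16*(Q+R+1)*pM/(p0*a1)^2 + 1)), fun μ hμ => ?_⟩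
  have hμ1 : μ < -((a2+1)/a1) :=
    lt_of_lt_of_le hμ ((min_le_left _ _).trans (min_le_left _ _))
  have hμ3 : μ < -((4*pM/(p0*L) + a2)/a1) :=
    lt_of_lt_of_le hμ ((min_le_left _ _).trans (min_le_right _ _))
  have hμ2 : μ < -((2*a2+2)/a1 + 16*(Q+R+1)*pM/(p0*a1)^2 + 1) :=
    lt_of_lt_of_le hμ (min_le_right _ _)
  obtain ⟨hc, hμneg, hC3, hC2⟩ := stmt_11_coeff L a1 a2 hL ha1 ha2 pM Q R p0
    hp0pos hpMpos hQpos hRpos μ hμ1 hμ3 hμ2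
  -- differentiability facts for the solution
  have hgd : ∀ y ∈ Ioo 0 L, DifferentiableAt ℝ (f μ) y := fun y hy =>
    ((hfsmooth μ).differentiableOn (by norm_num)).differentiableAt (Icc_mem_nhds hy.1 hy.2)
  have hgdiff0 : DifferentiableAt ℝ (f μ) 0 := by
    by_contra h
    have h2 := deriv_zero_of_not_differentiableAt h
    rw [hinit1 μ] at h2
    linarith
  have hG : ContinuousOn (derivWithin (f μ) (Icc 0 L)) (Icc 0 L) :=
    (hfsmooth μ).continuousOn_derivWithin (uniqueDiffOn_Icc hL) (by norm_num)
  have hGeq : ∀ y ∈ Ico 0 L, deriv (f μ) y = derivWithin (f μ) (Icc 0 L) y := by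
    intro y hy
    rcases eq_or_lt_of_le hy.1 with h | h
    · rw [← h]
      exact (hgdiff0.derivWithin ((uniqueDiffOn_Icc hL) 0 h0mem)).symm
    · exact (derivWithin_of_mem_nhds (Icc_mem_nhds h hy.2)).symm
  have hPc : ContinuousOn (fun y => p y * deriv (f μ) y) (Ico 0 L) := by
    apply ContinuousOn.congr
      ((hp.continuousOn.mono Ico_subset_Icc_self).mul (hG.mono Ico_subset_Icc_self))
    intro y hy
    dsimp only
    rw [hGeq y hy]
    rfl
  have hPd : ∀ y ∈ Ioo 0 L, DifferentiableAt ℝ (fun y => p y * deriv (f μ) y) y := by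
    intro y hy
    have h1 : DifferentiableAt ℝ p y :=
      (hp.contDiffAt (Icc_mem_nhds hy.1 hy.2)).differentiableAt (by norm_num)
    have h2 : ContDiffOn ℝ 2 (f μ) (Ioo 0 L) := (hfsmooth μ).mono Ioo_subset_Icc_self
    have h3 : ContDiffOn ℝ 1 (deriv (f μ)) (Ioo 0 L) :=
      h2.deriv_of_isOpen isOpen_Ioo (by norm_num)
    have h4 : DifferentiableAt ℝ (deriv (f μ)) y :=
      (h3.differentiableOn (by norm_num)).differentiableAt (isOpen_Ioo.mem_nhds hy)
    exact h1.mul h4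
  have hgderiv : ∀ y ∈ Ioo 0 L, deriv (f μ) y = (fun y => p y * deriv (f μ) y) y / p y := by
    intro y hy
    dsimp only
    rw [mul_comm, mul_div_assoc, div_self (ne_of_gt (hppos y (Ioo_subset_Icc_self hy))), mul_one]
  have hPderiv : ∀ y ∈ Ioo 0 L,
      deriv (fun y => p y * deriv (f μ) y) y = (q y - μ * r y) * f μ y := by
    intro y hy
    have := hode μ y (Ioo_subset_Icc_self hy)
    linarith
  have hK : 0 < Q - μ * R := by nlinarith
  have hV : ∀ y ∈ Icc 0 L, 0 < q y - μ * r y := by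
    intro y hy
    nlinarith [hqpos y hy, mul_pos (neg_pos.mpr hμneg) (hrpos y hy)]
  have hVK : ∀ y ∈ Icc 0 L, q y - μ * r y ≤ Q - μ * R := by
    intro y hy
    nlinarith [hQb y hy, mul_le_mul_of_nonneg_left (hRb y hy) (neg_nonneg.mpr hμneg.le)]
  have hP0 : (fun y => p y * deriv (f μ) y) 0 = p0 * (a1*μ+a2) := by
    dsimp only
    rw [hp0def, hinit1 μ]
  exact zero_unique_aux L pM (Q - μ*R) (a1*μ+a2) p0 hL p (fun y => q y - μ * r y) (f μ)
    (fun y => p y * deriv (f μ) y) (hfsmooth μ).continuousOn hgd hPc hPd hgderiv hppos hpMb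
    hPderiv hV hVK (hinit0 μ) hP0 (by linarith) hp0pos hpMpos hK hC2 hC3
end

section
/- Let p, q, r be positive C¹ functions on [0,L], λ > 0, and let f(·;λ) solve (p f')' - (q - λ r) f = 0 with f(0;λ)=1, f'(0;λ)=α₁λ+α₂ (α₁, α₂ > 0). If f(·;λ) has at least n simple zeros z₁(λ) < … < z_n(λ) in (0,L), then for each j the identity p(z_{j+1})(f'(z_{j+1};λ))² z_{j+1}'(λ) = p(z_j)(f'(z_j;λ))² z_j'(λ) - ∫_{z_j}^{z_{j+1}} r f² dx holds, and by induction z_j'(λ) < 0 for every j = 1,…,n: all zeros move left as λ increases. -/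
open Set

/-- Recursive identity between consecutive zeros `z_j(λ)`, `z_{j+1}(λ)` and the
consequence that all zeros move left as `λ > 0` increases. -/
theorem stmt_15 (L a1 a2 lam : ℝ) (n : ℕ) (hn : 1 ≤ n) (hL : 0 < L)
    (ha1 : 0 < a1) (ha2 : 0 < a2) (hlam : 0 < lam)
    (p q r : ℝ → ℝ) (f : ℝ → ℝ → ℝ) (z : ℕ → ℝ → ℝ) (D : Set ℝ)
    (hD : IsOpen D) (hmem : lam ∈ D) (hDpos : D ⊆ Ioi 0)
    (hp : ContDiffOn ℝ 1 p (Icc 0 L)) (hq : ContDiffOn ℝ 1 q (Icc 0 L))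
    (hr : ContDiffOn ℝ 1 r (Icc 0 L))
    (hppos : ∀ x ∈ Icc 0 L, 0 < p x) (hqpos : ∀ x ∈ Icc 0 L, 0 < q x)
    (hrpos : ∀ x ∈ Icc 0 L, 0 < r x)
    (hfsmooth : ∀ μ : ℝ, ContDiffOn ℝ 2 (f μ) (Icc 0 L))
    (hjoint : ContDiff ℝ 1 (fun w : ℝ × ℝ => f w.1 w.2))
    (hjoint' : ContDiff ℝ 1 (fun w : ℝ × ℝ => deriv (f w.1) w.2))
    (hode : ∀ μ : ℝ, ∀ x ∈ Icc 0 L,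
      deriv (fun y => p y * deriv (f μ) y) x - (q x - μ * r x) * f μ x = 0)
    (hinit0 : ∀ μ : ℝ, f μ 0 = 1)
    (hinit1 : ∀ μ : ℝ, deriv (f μ) 0 = a1 * μ + a2)
    (hzsmooth : ∀ j, 1 ≤ j → j ≤ n → ContDiffOn ℝ 1 (z j) D)
    (hzeros : ∀ μ ∈ D, ∀ j, 1 ≤ j → j ≤ n →
      z j μ ∈ Ioo 0 L ∧ f μ (z j μ) = 0 ∧ deriv (f μ) (z j μ) ≠ 0)
    (horder : ∀ μ ∈ D, ∀ i j, 1 ≤ i → i < j → j ≤ n → z i μ < z j μ)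
    (hIFT : ∀ μ ∈ D, ∀ j, 1 ≤ j → j ≤ n →
      deriv (z j) μ = -(deriv (fun ν => f ν (z j μ)) μ) / deriv (f μ) (z j μ))
    (hbase : p (z 1 lam) * deriv (f lam) (z 1 lam) *
        deriv (fun ν => f ν (z 1 lam)) lam
      = lam⁻¹ * (a2 + ∫ x in (0:ℝ)..(z 1 lam),
          (p x * (deriv (f lam) x) ^ 2 + q x * (f lam x) ^ 2))) :
    (∀ j, 1 ≤ j → j < n →
      p (z (j+1) lam) * (deriv (f lam) (z (j+1) lam)) ^ 2 * deriv (z (j+1)) lam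
        = p (z j lam) * (deriv (f lam) (z j lam)) ^ 2 * deriv (z j) lam
          - ∫ x in (z j lam)..(z (j+1) lam), r x * (f lam x) ^ 2) ∧
    (∀ j, 1 ≤ j → j ≤ n → deriv (z j) lam < 0) := by

  classical
  obtain ⟨eps, heps, hball⟩ := Metric.isOpen_iff.1 hD lam hmem
  have hballD : Metric.ball lam eps ⊆ D := hball
  have hballpos : ∀ μ ∈ Metric.ball lam eps, 0 < μ := fun μ hμ => hDpos (hballD hμ)
  set G : ℝ → ℝ → ℝ :=
    fun μ x => fderiv ℝ (fun w : ℝ × ℝ => f w.1 w.2) (μ, x) (1, 0) with hGdef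
  set H : ℝ → ℝ → ℝ :=
    fun μ x => fderiv ℝ (fun w : ℝ × ℝ => deriv (f w.1) w.2) (μ, x) (1, 0) with hHdef
  have hGd : ∀ μ x : ℝ, HasDerivAt (fun ν => f ν x) (G μ x) μ := by
    intro μ x
    have h1 : HasFDerivAt (fun w : ℝ × ℝ => f w.1 w.2)
        (fderiv ℝ (fun w : ℝ × ℝ => f w.1 w.2) (μ, x)) (μ, x) :=
      (hjoint.differentiable one_ne_zero (μ, x)).hasFDerivAt
    have h2 : HasDerivAt (fun ν : ℝ => ((ν, x) : ℝ × ℝ)) ((1:ℝ), (0:ℝ)) μ :=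
      (hasDerivAt_id μ).prodMk (hasDerivAt_const μ x)
    exact h1.comp_hasDerivAt μ h2
  have hHd : ∀ μ x : ℝ, HasDerivAt (fun ν => deriv (f ν) x) (H μ x) μ := by
    intro μ x
    have h1 : HasFDerivAt (fun w : ℝ × ℝ => deriv (f w.1) w.2)
        (fderiv ℝ (fun w : ℝ × ℝ => deriv (f w.1) w.2) (μ, x)) (μ, x) :=
      (hjoint'.differentiable one_ne_zero (μ, x)).hasFDerivAt
    have h2 : HasDerivAt (fun ν : ℝ => ((ν, x) : ℝ × ℝ)) ((1:ℝ), (0:ℝ)) μ :=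
      (hasDerivAt_id μ).prodMk (hasDerivAt_const μ x)
    exact h1.comp_hasDerivAt μ h2
  have hGc : Continuous fun w : ℝ × ℝ => G w.1 w.2 :=
    (hjoint.continuous_fderiv one_ne_zero).clm_apply continuous_const
  have hHc : Continuous fun w : ℝ × ℝ => H w.1 w.2 :=
    (hjoint'.continuous_fderiv one_ne_zero).clm_apply continuous_const
  have hGcx : Continuous fun x : ℝ => G lam x :=
    hGc.comp (continuous_const.prodMk continuous_id)
  have hHcx : Continuous fun x : ℝ => H lam x :=
    hHc.comp (continuous_const.prodMk continuous_id)
  have hfc : ∀ μ : ℝ, Continuous (f μ) := fun μ =>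
    hjoint.continuous.comp (continuous_const.prodMk continuous_id)
  have hfdI : ∀ (μ : ℝ), ∀ x ∈ Ioo 0 L, DifferentiableAt ℝ (f μ) x := by
    intro μ x hx
    exact ((hfsmooth μ).contDiffAt (Icc_mem_nhds hx.1 hx.2)).differentiableAt two_ne_zero
  have hfd0 : ∀ μ : ℝ, 0 < μ → DifferentiableAt ℝ (f μ) 0 := by
    intro μ hμ
    by_contra hcon
    have h0 : deriv (f μ) 0 = 0 := deriv_zero_of_not_differentiableAt hcon
    rw [hinit1] at h0; nlinarith
  have hdc : ∀ μ : ℝ, Continuous (deriv (f μ)) := by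
    intro μ
    exact hjoint'.continuous.comp (continuous_const.prodMk continuous_id)
  have hdd : ∀ (μ : ℝ), ∀ x ∈ Ioo 0 L, DifferentiableAt ℝ (deriv (f μ)) x := by
    intro μ x hx
    have hu : UniqueDiffOn ℝ (Icc (0:ℝ) L) := uniqueDiffOn_Icc hL
    have hdw : ContDiffOn ℝ 1 (derivWithin (f μ) (Icc 0 L)) (Icc 0 L) :=
      (hfsmooth μ).derivWithin hu (by norm_num)
    have h1 : DifferentiableAt ℝ (derivWithin (f μ) (Icc 0 L)) x :=
      ((hdw.contDiffAt (Icc_mem_nhds hx.1 hx.2))).differentiableAt one_ne_zero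
    apply h1.congr_of_eventuallyEq
    filter_upwards [isOpen_Ioo.mem_nhds hx] with y hy
    exact ((hfdI μ y hy).derivWithin (hu y (Ioo_subset_Icc_self hy))).symm
  have hpd : ∀ x ∈ Ioo 0 L, DifferentiableAt ℝ p x := by
    intro x hx
    exact (hp.contDiffAt (Icc_mem_nhds hx.1 hx.2)).differentiableAt one_ne_zero
  -- FTC1 for f
  have hFTCf : ∀ x ∈ Ioo 0 L, ∀ μ ∈ Metric.ball lam eps,
      (∫ t in (0:ℝ)..x, deriv (f μ) t) = f μ x - 1 := by
    intro x hx μ hμ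
    have h1 : (∫ t in (0:ℝ)..x, deriv (f μ) t) = f μ x - f μ 0 := by
      apply intervalIntegral.integral_eq_sub_of_hasDerivAt
      · intro t ht
        rw [uIcc_of_le hx.1.le] at ht
        rcases eq_or_lt_of_le ht.1 with h | h
        · rw [← h]
          exact (hfd0 μ (hballpos μ hμ)).hasDerivAt
        · exact (hfdI μ t ⟨h, lt_of_le_of_lt ht.2 hx.2⟩).hasDerivAt
      · exact (hdc μ).intervalIntegrable 0 x
    rw [h1, hinit0]
  -- FTC1 for p * deriv f
  have hFTCA : ∀ x ∈ Ioo 0 L, ∀ μ ∈ Metric.ball lam eps,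
      (∫ t in (0:ℝ)..x, (q t - μ * r t) * f μ t)
        = p x * deriv (f μ) x - p 0 * (a1 * μ + a2) := by
    intro x hx μ hμ
    have hsub : Icc (0:ℝ) x ⊆ Icc 0 L := Icc_subset_Icc le_rfl hx.2.le
    have hcont : ContinuousOn (fun y => p y * deriv (f μ) y) (Icc 0 x) :=
      (hp.continuousOn.mono hsub).mul (hdc μ).continuousOn
    have hder : ∀ t ∈ Ioo 0 x, HasDerivWithinAt (fun y => p y * deriv (f μ) y)
        ((q t - μ * r t) * f μ t) (Ioi t) t := by
      intro t ht
      have htL : t ∈ Ioo 0 L := ⟨ht.1, lt_trans ht.2 hx.2⟩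
      have hdiff : DifferentiableAt ℝ (fun y => p y * deriv (f μ) y) t :=
        (hpd t htL).mul (hdd μ t htL)
      have h2 := hode μ t (Ioo_subset_Icc_self htL)
      have h3 : deriv (fun y => p y * deriv (f μ) y) t = (q t - μ * r t) * f μ t := by
        linarith
      have h1 := hdiff.hasDerivAt
      rw [h3] at h1
      exact h1.hasDerivWithinAt
    have hint : IntervalIntegrable (fun t => (q t - μ * r t) * f μ t) MeasureTheory.volume 0 x := by
      apply ContinuousOn.intervalIntegrable
      rw [uIcc_of_le hx.1.le]
      exact ((hq.continuousOn.mono hsub).sub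
        (continuousOn_const.mul (hr.continuousOn.mono hsub))).mul (hfc μ).continuousOn
    rw [intervalIntegral.integral_eq_sub_of_hasDeriv_right_of_le hx.1.le hcont hder hint,
      hinit1]
  -- differentiation under the integral sign: representation of G lam
  have hC : ∀ x ∈ Ioo 0 L, G lam x = ∫ t in (0:ℝ)..x, H lam t := by
    intro x hx
    obtain ⟨Cb, hCb⟩ := ((isCompact_closedBall lam (eps/2)).prod
      (isCompact_uIcc (a := (0:ℝ)) (b := x))).exists_bound_of_continuousOn hHc.continuousOn
    have hder := intervalIntegral.hasDerivAt_integral_of_dominated_loc_of_deriv_le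
      (F := fun μ t => deriv (f μ) t) (F' := fun μ t => H μ t) (bound := fun _ => Cb)
      (a := 0) (b := x) (x₀ := lam) (Metric.ball_mem_nhds lam (half_pos heps))
      (Filter.Eventually.of_forall fun μ => (hdc μ).aestronglyMeasurable)
      ((hdc lam).intervalIntegrable 0 x)
      hHcx.aestronglyMeasurable
      (Filter.Eventually.of_forall fun t => fun ht μ hμ =>
        hCb (μ, t) ⟨Metric.ball_subset_closedBall hμ, uIoc_subset_uIcc ht⟩)
      (intervalIntegrable_const (μ := MeasureTheory.volume))
      (Filter.Eventually.of_forall fun t => fun _ μ _ => hHd μ t)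
    have heq : (fun μ => ∫ t in (0:ℝ)..x, deriv (f μ) t) =ᶠ[nhds lam]
        fun μ => f μ x - 1 := by
      filter_upwards [Metric.ball_mem_nhds lam heps] with μ hμ
      exact hFTCf x hx μ hμ
    have h2 : HasDerivAt (fun μ => f μ x - 1) (∫ t in (0:ℝ)..x, H lam t) lam :=
      hder.2.congr_of_eventuallyEq heq.symm
    have h3 : HasDerivAt (fun μ => f μ x - 1) (G lam x) lam := (hGd lam x).sub_const 1
    exact h3.unique h2
  -- differentiation under the integral sign: representation of p * H lam
  have hB : ∀ x ∈ Ioo 0 L, p x * H lam x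
      = p 0 * a1 + ∫ t in (0:ℝ)..x, (-(r t) * f lam t + (q t - lam * r t) * G lam t) := by
    intro x hx
    have hsub : Icc (0:ℝ) x ⊆ Icc 0 L := Icc_subset_Icc le_rfl hx.2.le
    have hsubI : uIoc (0:ℝ) x ⊆ Icc 0 L := by
      rw [uIoc_of_le hx.1.le]
      exact Ioc_subset_Icc_self.trans hsub
    have hmapsTo : ∀ w : ℝ × ℝ, w ∈ (Metric.closedBall lam (eps/2)) ×ˢ uIcc (0:ℝ) x →
        w.2 ∈ Icc (0:ℝ) L := by
      intro w hw
      have := hw.2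
      rw [uIcc_of_le hx.1.le] at this
      exact hsub this
    have hqc : ContinuousOn (fun w : ℝ × ℝ => q w.2)
        ((Metric.closedBall lam (eps/2)) ×ˢ uIcc (0:ℝ) x) :=
      hq.continuousOn.comp continuous_snd.continuousOn hmapsTo
    have hrc : ContinuousOn (fun w : ℝ × ℝ => r w.2)
        ((Metric.closedBall lam (eps/2)) ×ˢ uIcc (0:ℝ) x) :=
      hr.continuousOn.comp continuous_snd.continuousOn hmapsTo
    have hΦc : ContinuousOn (fun w : ℝ × ℝ =>
        -(r w.2) * f w.1 w.2 + (q w.2 - w.1 * r w.2) * G w.1 w.2)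
        ((Metric.closedBall lam (eps/2)) ×ˢ uIcc (0:ℝ) x) := by
      exact (hrc.neg.mul hjoint.continuous.continuousOn).add
        ((hqc.sub (continuous_fst.continuousOn.mul hrc)).mul hGc.continuousOn)
    obtain ⟨Cb, hCb⟩ := ((isCompact_closedBall lam (eps/2)).prod
      (isCompact_uIcc (a := (0:ℝ)) (b := x))).exists_bound_of_continuousOn hΦc
    have hFcont : ∀ μ : ℝ, ContinuousOn (fun t => (q t - μ * r t) * f μ t) (Icc 0 L) :=
      fun μ => (hq.continuousOn.sub (continuousOn_const.mul hr.continuousOn)).mul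
        (hfc μ).continuousOn
    have hF'cont : ContinuousOn
        (fun t => -(r t) * f lam t + (q t - lam * r t) * G lam t) (Icc 0 L) :=
      ((hr.continuousOn.neg.mul (hfc lam).continuousOn)).add
        ((hq.continuousOn.sub (continuousOn_const.mul hr.continuousOn)).mul
          hGcx.continuousOn)
    have hder := intervalIntegral.hasDerivAt_integral_of_dominated_loc_of_deriv_le
      (F := fun μ t => (q t - μ * r t) * f μ t)
      (F' := fun μ t => -(r t) * f μ t + (q t - μ * r t) * G μ t)
      (bound := fun _ => Cb) (a := 0) (b := x) (x₀ := lam) (Metric.ball_mem_nhds lam (half_pos heps))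
      (Filter.Eventually.of_forall fun μ =>
        ((hFcont μ).mono hsubI).aestronglyMeasurable (measurableSet_uIoc))
      (((hFcont lam).mono (by rw [uIcc_of_le hx.1.le]; exact hsub)).intervalIntegrable)
      ((hF'cont.mono hsubI).aestronglyMeasurable (measurableSet_uIoc))
      (Filter.Eventually.of_forall fun t => fun ht μ hμ =>
        hCb (μ, t) ⟨Metric.ball_subset_closedBall hμ, uIoc_subset_uIcc ht⟩)
      (intervalIntegrable_const (μ := MeasureTheory.volume))
      (Filter.Eventually.of_forall fun t => fun _ μ _ => by
        have h1 : HasDerivAt (fun ν : ℝ => q t - ν * r t) (-(r t)) μ := by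
          simpa using ((hasDerivAt_id μ).mul_const (r t)).const_sub (q t)
        have h2 : HasDerivAt (fun ν => (q t - ν * r t) * f ν t) _ μ := h1.mul (hGd μ t)
        convert h2 using 1)
    have heq : (fun μ => ∫ t in (0:ℝ)..x, (q t - μ * r t) * f μ t) =ᶠ[nhds lam]
        fun μ => p x * deriv (f μ) x - p 0 * (a1 * μ + a2) := by
      filter_upwards [Metric.ball_mem_nhds lam heps] with μ hμ
      exact hFTCA x hx μ hμ
    have h2 : HasDerivAt (fun μ => p x * deriv (f μ) x - p 0 * (a1 * μ + a2))
        (∫ t in (0:ℝ)..x, (-(r t) * f lam t + (q t - lam * r t) * G lam t)) lam :=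
      hder.2.congr_of_eventuallyEq heq.symm
    have h3 : HasDerivAt (fun μ => p x * deriv (f μ) x - p 0 * (a1 * μ + a2))
        (p x * H lam x - p 0 * a1) lam := by
      have ha : HasDerivAt (fun μ => p x * deriv (f μ) x) (p x * H lam x) lam :=
        (hHd lam x).const_mul (p x)
      have hb : HasDerivAt (fun μ : ℝ => p 0 * (a1 * μ + a2)) (p 0 * a1) lam := by
        simpa using (((hasDerivAt_id lam).const_mul a1).add_const a2).const_mul (p 0)
      exact ha.sub hb
    have h4 := h3.unique h2
    linarith
  -- the Wronskian-type function and its derivative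
  set W : ℝ → ℝ := fun y => p y * deriv (f lam) y * G lam y - f lam y * (p y * H lam y)
    with hWdef
  have hW : ∀ x ∈ Ioo 0 L, HasDerivAt W (r x * f lam x ^ 2) x := by
    intro x hx
    have hA' : HasDerivAt (fun y => p y * deriv (f lam) y) ((q x - lam * r x) * f lam x) x := by
      have hdiff : DifferentiableAt ℝ (fun y => p y * deriv (f lam) y) x :=
        (hpd x hx).mul (hdd lam x hx)
      have h2 := hode lam x (Ioo_subset_Icc_self hx)
      have h3 : deriv (fun y => p y * deriv (f lam) y) x = (q x - lam * r x) * f lam x := by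
        linarith
      have h1 := hdiff.hasDerivAt
      rw [h3] at h1
      exact h1
    have hg' : HasDerivAt (fun y => G lam y) (H lam x) x := by
      have h1 : HasDerivAt (fun y => ∫ t in (0:ℝ)..y, H lam t) (H lam x) x :=
        intervalIntegral.integral_hasDerivAt_right (hHcx.intervalIntegrable 0 x)
          (hHcx.stronglyMeasurableAtFilter _ _) hHcx.continuousAt
      apply h1.congr_of_eventuallyEq
      filter_upwards [isOpen_Ioo.mem_nhds hx] with y hy
      exact hC y hy
    have hF'cont : ContinuousOn
        (fun t => -(r t) * f lam t + (q t - lam * r t) * G lam t) (Icc 0 L) :=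
      ((hr.continuousOn.neg.mul (hfc lam).continuousOn)).add
        ((hq.continuousOn.sub (continuousOn_const.mul hr.continuousOn)).mul
          hGcx.continuousOn)
    have hB' : HasDerivAt (fun y => p y * H lam y)
        (-(r x) * f lam x + (q x - lam * r x) * G lam x) x := by
      have hint : IntervalIntegrable
          (fun t => -(r t) * f lam t + (q t - lam * r t) * G lam t)
          MeasureTheory.volume 0 x := by
        apply ContinuousOn.intervalIntegrable
        apply hF'cont.mono
        rw [uIcc_of_le hx.1.le]
        exact Icc_subset_Icc le_rfl hx.2.le
      have h1 : HasDerivAt (fun y => p 0 * a1 +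
          ∫ t in (0:ℝ)..y, (-(r t) * f lam t + (q t - lam * r t) * G lam t))
          (-(r x) * f lam x + (q x - lam * r x) * G lam x) x := by
        apply HasDerivAt.const_add
        exact intervalIntegral.integral_hasDerivAt_right hint
          ((hF'cont.mono Ioo_subset_Icc_self).stronglyMeasurableAtFilter isOpen_Ioo x hx)
          (hF'cont.continuousAt (Icc_mem_nhds hx.1 hx.2))
      apply h1.congr_of_eventuallyEq
      filter_upwards [isOpen_Ioo.mem_nhds hx] with y hy
      exact hB y hy
    have hf'x : HasDerivAt (f lam) (deriv (f lam) x) x := (hfdI lam x hx).hasDerivAt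
    have hcomb : HasDerivAt (fun y => p y * deriv (f lam) y * G lam y - f lam y * (p y * H lam y)) _ x :=
      (hA'.mul hg').sub (hf'x.mul hB')
    rw [hWdef]
    convert hcomb using 1
    ring
  have hkey : ∀ a b : ℝ, a ∈ Ioo 0 L → b ∈ Ioo 0 L → a ≤ b →
      (∫ t in a..b, r t * f lam t ^ 2) = W b - W a := by
    intro a b ha hb hab
    apply intervalIntegral.integral_eq_sub_of_hasDerivAt
    · intro t ht
      rw [uIcc_of_le hab] at ht
      exact hW t ⟨lt_of_lt_of_le ha.1 ht.1, lt_of_le_of_lt ht.2 hb.2⟩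
    · apply ContinuousOn.intervalIntegrable
      apply ContinuousOn.mul
      · apply hr.continuousOn.mono
        intro t ht
        rw [uIcc_of_le hab] at ht
        exact ⟨le_trans (le_of_lt ha.1) ht.1, le_trans ht.2 (le_of_lt hb.2)⟩
      · exact ((hfc lam).pow 2).continuousOn
  -- basic facts about the zeros
  have hzmem : ∀ j, 1 ≤ j → j ≤ n → z j lam ∈ Ioo 0 L := fun j h1 h2 =>
    (hzeros lam hmem j h1 h2).1
  have hzval : ∀ j, 1 ≤ j → j ≤ n → f lam (z j lam) = 0 := fun j h1 h2 =>
    (hzeros lam hmem j h1 h2).2.1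
  have hzder : ∀ j, 1 ≤ j → j ≤ n → deriv (f lam) (z j lam) ≠ 0 := fun j h1 h2 =>
    (hzeros lam hmem j h1 h2).2.2
  have hWz : ∀ j, 1 ≤ j → j ≤ n →
      W (z j lam) = p (z j lam) * deriv (f lam) (z j lam) * G lam (z j lam) := by
    intro j h1 h2
    rw [hWdef]
    simp [hzval j h1 h2]
  have hMz : ∀ j, 1 ≤ j → j ≤ n →
      p (z j lam) * (deriv (f lam) (z j lam)) ^ 2 * deriv (z j) lam = -(W (z j lam)) := by
    intro j h1 h2
    rw [hIFT lam hmem j h1 h2, hWz j h1 h2, (hGd lam (z j lam)).deriv]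
    have hne := hzder j h1 h2
    field_simp
  -- the recursion identity
  have hident : ∀ j, 1 ≤ j → j < n →
      p (z (j+1) lam) * (deriv (f lam) (z (j+1) lam)) ^ 2 * deriv (z (j+1)) lam
        = p (z j lam) * (deriv (f lam) (z j lam)) ^ 2 * deriv (z j) lam
          - ∫ x in (z j lam)..(z (j+1) lam), r x * (f lam x) ^ 2 := by
    intro j h1 h2
    have h1' : 1 ≤ j + 1 := by omega
    have h2' : j + 1 ≤ n := by omega
    have hlt : z j lam < z (j+1) lam := horder lam hmem j (j+1) h1 (by omega) h2'
    rw [hMz (j+1) h1' h2', hMz j h1 (by omega),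
      hkey (z j lam) (z (j+1) lam) (hzmem j h1 (by omega)) (hzmem (j+1) h1' h2')
        (le_of_lt hlt)]
    ring
  refine ⟨hident, ?_⟩
  -- negativity by induction
  have hMneg : ∀ j, 1 ≤ j → j ≤ n →
      p (z j lam) * (deriv (f lam) (z j lam)) ^ 2 * deriv (z j) lam < 0 := by
    intro j h1
    induction j, h1 using Nat.le_induction with
    | base =>
      intro _
      rw [hMz 1 le_rfl hn]
      have hWpos : 0 < W (z 1 lam) := by
        rw [hWz 1 le_rfl hn]
        have hG1 : deriv (fun ν => f ν (z 1 lam)) lam = G lam (z 1 lam) :=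
          (hGd lam (z 1 lam)).deriv
        rw [hG1] at hbase
        rw [hbase]
        have hint : 0 ≤ ∫ x in (0:ℝ)..(z 1 lam),
            (p x * (deriv (f lam) x) ^ 2 + q x * (f lam x) ^ 2) := by
          apply intervalIntegral.integral_nonneg (le_of_lt (hzmem 1 le_rfl hn).1)
          intro u hu
          have huL : u ∈ Icc (0:ℝ) L :=
            ⟨hu.1, le_trans hu.2 (le_of_lt (hzmem 1 le_rfl hn).2)⟩
          have := hppos u huL
          have := hqpos u huL
          positivity
        positivity
      linarith
    | succ j hj ih =>
      intro h2
      have hjn : j ≤ n := by omega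
      have hlt : z j lam < z (j+1) lam := horder lam hmem j (j+1) hj (by omega) h2
      have hint : 0 ≤ ∫ x in (z j lam)..(z (j+1) lam), r x * (f lam x) ^ 2 := by
        apply intervalIntegral.integral_nonneg (le_of_lt hlt)
        intro u hu
        have huL : u ∈ Icc (0:ℝ) L :=
          ⟨le_trans (le_of_lt (hzmem j hj hjn).1) hu.1,
            le_trans hu.2 (le_of_lt (hzmem (j+1) (by omega) h2).2)⟩
        have := hrpos u huL
        positivity
      have := ih (by omega)
      rw [hident j hj (by omega)]
      linarith
  intro j h1 h2
  have hM := hMneg j h1 h2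
  have hppos' : 0 < p (z j lam) :=
    hppos _ (Ioo_subset_Icc_self (hzmem j h1 h2))
  have hfp : 0 < (deriv (f lam) (z j lam)) ^ 2 := by
    have := hzder j h1 h2
    positivity
  by_contra hcon
  push_neg at hcon
  have : 0 ≤ p (z j lam) * (deriv (f lam) (z j lam)) ^ 2 * deriv (z j) lam :=
    mul_nonneg (mul_nonneg hppos'.le hfp.le) hcon
  linarith
end
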